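/- Let $\alpha > \alpha' > 1$. Let $f : \mathbb{S}^1 \to \mathbb{C}$ be a function with $f(1) = 0$ such that $z \mapsto f(z)\,(1 + |\log|z-1||^{2\alpha})^{1/2}$ extends continuously to $\mathbb{S}^1$. Then $f$ can be approximated, in the norm $\|g\|_{\alpha'} = \sup_{|z|=1, z\neq 1} |\log|z-1||^{\alpha'}|g(z)|$, by functions of the form $(z-1)Q(z,\bar z)$ where $Q$ is a trigonometric polynomial: for every $\epsilon > 0$ there is a trigonometric polynomial $Q$ with $\|f - (z-1)Q\|_{\alpha'} < \epsilon$. -/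

import Mathlib

open Complex

noncomputable abbrev sphere1 : Set ℂ := Metric.sphere (0:ℂ) 1

noncomputable def XX : C(sphere1, ℂ) := ⟨fun w => (w:ℂ), continuous_subtype_val⟩

lemma sphere_norm_one (w : sphere1) : ‖(w:ℂ)‖ = 1 := by
  have := w.2; rwa [mem_sphere_zero_iff_norm] at this

lemma sphere_ne_zero (w : sphere1) : (w:ℂ) ≠ 0 := by
  intro h; have := sphere_norm_one w; rw [h] at this; simp at this

lemma sphere_conj (w : sphere1) : (starRingEnd ℂ) (w:ℂ) = (w:ℂ)⁻¹ := by
  have h1 : (w:ℂ) * (starRingEnd ℂ) (w:ℂ) = 1 := by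
    rw [Complex.mul_conj]
    norm_cast
    rw [Complex.normSq_eq_norm_sq, sphere_norm_one]; norm_num
  field_simp [sphere_ne_zero w] at h1 ⊢
  linear_combination h1

lemma monomial_form (p : C(sphere1, ℂ))
    (hp : p ∈ Submonoid.closure (({XX} : Set C(sphere1, ℂ)) ∪ star {XX})) :
    ∃ k : ℤ, ∀ w : sphere1, p w = (w:ℂ) ^ k := by
  induction hp using Submonoid.closure_induction with
  | mem x hx =>
    rcases hx with hx | hx
    · refine ⟨1, fun w => ?_⟩
      rw [Set.mem_singleton_iff.mp hx]; simp [XX]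
    · rw [Set.star_singleton, Set.mem_singleton_iff] at hx
      refine ⟨-1, fun w => ?_⟩
      rw [hx]
      simp only [ContinuousMap.star_apply, XX, ContinuousMap.coe_mk]
      rw [show star ((w:ℂ)) = (starRingEnd ℂ) (w:ℂ) from rfl, sphere_conj, zpow_neg, zpow_one]
  | one => exact ⟨0, fun w => by simp⟩
  | mul x y _ _ hx hy =>
    obtain ⟨k₁, h₁⟩ := hx
    obtain ⟨k₂, h₂⟩ := hy
    refine ⟨k₁ + k₂, fun w => ?_⟩
    rw [ContinuousMap.mul_apply, h₁, h₂, zpow_add₀ (sphere_ne_zero w)]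

lemma laurent_form (q : C(sphere1, ℂ))
    (hq : q ∈ StarAlgebra.adjoin ℂ ({XX} : Set C(sphere1, ℂ))) :
    ∃ (N : ℕ) (c : ℤ → ℂ), ∀ w : sphere1,
      q w = ∑ m ∈ Finset.Icc (-(N:ℤ)) (N:ℤ), c m * (w:ℂ) ^ m := by
  have hq' : q ∈ Submodule.span ℂ
      (Submonoid.closure (({XX} : Set C(sphere1, ℂ)) ∪ star {XX}) : Set C(sphere1, ℂ)) := by
    rw [← StarAlgebra.adjoin_eq_span]
    exact hq
  clear hq
  induction hq' using Submodule.span_induction with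
  | mem x hx =>
    obtain ⟨k, hk⟩ := monomial_form x hx
    refine ⟨k.natAbs, (fun m => if m = k then 1 else 0), fun w => ?_⟩
    rw [hk w]
    rw [Finset.sum_congr rfl (fun m _ => show (if m = k then (1:ℂ) else 0) * (w:ℂ)^m
      = if m = k then (w:ℂ)^m else 0 by split <;> simp)]
    rw [Finset.sum_ite_eq' (Finset.Icc (-(k.natAbs:ℤ)) (k.natAbs:ℤ)) k (fun m => (w:ℂ)^m)]
    rw [if_pos]
    simp only [Finset.mem_Icc]
    omega
  | zero => exact ⟨0, 0, fun w => by simp⟩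
  | add x y _ _ hx hy =>
    obtain ⟨N₁, c₁, h₁⟩ := hx
    obtain ⟨N₂, c₂, h₂⟩ := hy
    refine ⟨max N₁ N₂, (fun m => (if m ∈ Finset.Icc (-(N₁:ℤ)) (N₁:ℤ) then c₁ m else 0)
      + (if m ∈ Finset.Icc (-(N₂:ℤ)) (N₂:ℤ) then c₂ m else 0)), fun w => ?_⟩
    rw [ContinuousMap.add_apply, h₁, h₂]
    rw [Finset.sum_congr rfl (fun m _ => add_mul _ _ ((w:ℂ)^m)), Finset.sum_add_distrib]
    congr 1
    · rw [← Finset.sum_subset (Finset.Icc_subset_Icc (by simp) (by simp) :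
        Finset.Icc (-(N₁:ℤ)) (N₁:ℤ) ⊆ Finset.Icc (-((max N₁ N₂:ℕ):ℤ)) ((max N₁ N₂:ℕ):ℤ))
        (fun m _ hm => by rw [if_neg hm, zero_mul])]
      exact Finset.sum_congr rfl (fun m hm => by rw [if_pos hm])
    · rw [← Finset.sum_subset (Finset.Icc_subset_Icc (by simp) (by simp) :
        Finset.Icc (-(N₂:ℤ)) (N₂:ℤ) ⊆ Finset.Icc (-((max N₁ N₂:ℕ):ℤ)) ((max N₁ N₂:ℕ):ℤ))
        (fun m _ hm => by rw [if_neg hm, zero_mul])]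
      exact Finset.sum_congr rfl (fun m hm => by rw [if_pos hm])
  | smul a x _ hx =>
    obtain ⟨N, c, h⟩ := hx
    refine ⟨N, a • c, fun w => ?_⟩
    rw [ContinuousMap.smul_apply, h, Finset.smul_sum]
    exact Finset.sum_congr rfl (fun m _ => by simp [mul_assoc])

lemma dense_aux (h : C(sphere1, ℂ)) (η : ℝ) (hη : 0 < η) :
    ∃ q ∈ StarAlgebra.adjoin ℂ ({XX} : Set C(sphere1, ℂ)), dist h q < η := by
  have sep : (StarAlgebra.adjoin ℂ ({XX} : Set C(sphere1, ℂ))).SeparatesPoints := by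
    intro x y hxy
    exact ⟨XX, ⟨XX, StarAlgebra.self_mem_adjoin_singleton ℂ XX, rfl⟩,
      fun hc => hxy (Subtype.coe_injective hc)⟩
  have htop := ContinuousMap.starSubalgebra_topologicalClosure_eq_top_of_separatesPoints
    (StarAlgebra.adjoin ℂ ({XX} : Set C(sphere1, ℂ))) sep
  have hmem : h ∈ closure ((StarAlgebra.adjoin ℂ ({XX} : Set C(sphere1, ℂ)) : Set C(sphere1, ℂ))) := by
    have : h ∈ (StarAlgebra.adjoin ℂ ({XX} : Set C(sphere1, ℂ))).topologicalClosure := by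
      rw [htop]; trivial
    exact this
  rcases Metric.mem_closure_iff.mp hmem η hη with ⟨q, hq, hdq⟩
  exact ⟨q, hq, hdq⟩

lemma Kbound {α' : ℝ} (h1 : 1 < α') {t : ℝ} (ht : 0 < t) (ht2 : t ≤ 2) :
    |Real.log t| ^ α' * t ≤ (2*α') ^ α' + 2 := by
  have hα'0 : (0:ℝ) < α' := by linarith
  have hK0 : (0:ℝ) ≤ (2*α') ^ α' := Real.rpow_nonneg (by linarith) _
  by_cases h : 1 ≤ t
  · have hl : |Real.log t| ≤ 1 := by
      rw [_root_.abs_of_nonneg (Real.log_nonneg h)]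
      have := Real.log_le_sub_one_of_pos ht
      linarith
    have h2 : |Real.log t| ^ α' ≤ 1 := Real.rpow_le_one (abs_nonneg _) hl hα'0.le
    nlinarith [Real.rpow_nonneg (abs_nonneg (Real.log t)) α']
  · push_neg at h
    have hti : (1:ℝ) < t⁻¹ := (one_lt_inv₀ ht).mpr h
    have hti0 : (0:ℝ) < t⁻¹ := by linarith
    set β : ℝ := 1/(2*α') with hβdef
    have hβ0 : 0 < β := by positivity
    have habs : |Real.log t| = Real.log t⁻¹ := by
      rw [Real.log_inv, _root_.abs_of_neg (Real.log_neg ht h)]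
    have hrp0 : (0:ℝ) < t⁻¹ ^ β := Real.rpow_pos_of_pos hti0 β
    have hlog2 : Real.log t⁻¹ ≤ 2*α' * t⁻¹ ^ β := by
      have e1 : Real.log (t⁻¹ ^ β) = β * Real.log t⁻¹ := Real.log_rpow hti0 β
      have e2 : Real.log (t⁻¹ ^ β) ≤ t⁻¹ ^ β := by
        have := Real.log_le_sub_one_of_pos hrp0; linarith
      have hβα : β * (2*α') = 1 := by
        rw [hβdef]; field_simp
      nlinarith [Real.log_nonneg hti.le]
    have hstep : |Real.log t| ^ α' ≤ (2*α') ^ α' * t⁻¹ ^ ((1:ℝ)/2) := by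
      rw [habs]
      calc Real.log t⁻¹ ^ α' ≤ (2*α' * t⁻¹ ^ β) ^ α' :=
            Real.rpow_le_rpow (Real.log_nonneg hti.le) hlog2 hα'0.le
        _ = (2*α') ^ α' * (t⁻¹ ^ β) ^ α' := Real.mul_rpow (by linarith) hrp0.le
        _ = (2*α') ^ α' * t⁻¹ ^ ((1:ℝ)/2) := by
            rw [← Real.rpow_mul hti0.le]
            have hexp : β * α' = 1/2 := by
              rw [hβdef]
              field_simp
            rw [hexp]
    have hmul : t⁻¹ ^ ((1:ℝ)/2) * t = t ^ ((1:ℝ)/2) := by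
      rw [Real.inv_rpow ht.le, ← Real.rpow_neg_one (t ^ ((1:ℝ)/2)),
        ← Real.rpow_mul ht.le]
      nth_rewrite 2 [show t = t ^ (1:ℝ) from (Real.rpow_one t).symm]
      rw [← Real.rpow_add ht]
      norm_num
    have hle1 : t ^ ((1:ℝ)/2) ≤ 1 := Real.rpow_le_one ht.le h.le (by norm_num)
    calc |Real.log t| ^ α' * t ≤ ((2*α') ^ α' * t⁻¹ ^ ((1:ℝ)/2)) * t := by
          apply mul_le_mul_of_nonneg_right hstep ht.le
      _ = (2*α') ^ α' * (t⁻¹ ^ ((1:ℝ)/2) * t) := by ring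
      _ = (2*α') ^ α' * t ^ ((1:ℝ)/2) := by rw [hmul]
      _ ≤ (2*α') ^ α' * 1 := mul_le_mul_of_nonneg_left hle1 hK0
      _ ≤ (2*α') ^ α' + 2 := by linarith

lemma near_one {α α' C ε : ℝ} (h1 : 1 < α') (h2 : α' < α) (hC : 0 ≤ C) (hε : 0 < ε) :
    ∃ δ : ℝ, 0 < δ ∧ δ < 1 ∧ ∀ t : ℝ, 0 < t → t < δ →
      |Real.log t| ^ α' * C < ε * (1 + |Real.log t| ^ (2*α)) ^ ((1:ℝ)/2) := by
  have hd : (0:ℝ) < α - α' := by linarith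
  set T : ℝ := max 1 ((C/ε + 1) ^ (α - α')⁻¹) with hT
  have hT1 : (1:ℝ) ≤ T := le_max_left _ _
  refine ⟨Real.exp (-T), Real.exp_pos _, ?_, ?_⟩
  · rw [Real.exp_lt_one_iff]; linarith
  intro t ht htδ
  set L : ℝ := |Real.log t| with hL
  have hlt : Real.log t < -T := by
    calc Real.log t < Real.log (Real.exp (-T)) := Real.log_lt_log ht htδ
      _ = -T := Real.log_exp _
  have hLT : T < L := by
    rw [hL, _root_.abs_of_neg (by linarith)]; linarith
  have hL1 : (1:ℝ) < L := lt_of_le_of_lt hT1 hLT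
  have hL0 : (0:ℝ) < L := by linarith
  -- key: ε * L^(α-α') > C
  have hkey : C < ε * L ^ (α - α') := by
    have e1 : ((C/ε + 1) ^ (α - α')⁻¹) ^ (α - α') = C/ε + 1 :=
      Real.rpow_inv_rpow (by positivity) hd.ne'
    have e2 : ((C/ε + 1) ^ (α - α')⁻¹) ^ (α - α') ≤ T ^ (α - α') :=
      Real.rpow_le_rpow (Real.rpow_nonneg (by positivity) _) (le_max_right _ _) hd.le
    have e3 : T ^ (α - α') ≤ L ^ (α - α') :=
      Real.rpow_le_rpow (by linarith) hLT.le hd.le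
    have e4 : C/ε + 1 ≤ L ^ (α - α') := by rw [← e1]; linarith
    have := mul_le_mul_of_nonneg_left e4 hε.le
    rw [mul_add, mul_one, mul_div_cancel₀ _ hε.ne'] at this
    linarith
  -- W ≥ L^α = L^α' * L^(α-α')
  have hW : L ^ α' * L ^ (α - α') ≤ (1 + L ^ (2*α)) ^ ((1:ℝ)/2) := by
    have e1 : L ^ α' * L ^ (α - α') = L ^ α := by
      rw [← Real.rpow_add hL0]; ring_nf
    have e2 : (L ^ (2*α)) ^ ((1:ℝ)/2) = L ^ α := by
      rw [← Real.rpow_mul hL0.le]; congr 1; ring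
    have e3 : (L ^ (2*α)) ^ ((1:ℝ)/2) ≤ (1 + L ^ (2*α)) ^ ((1:ℝ)/2) :=
      Real.rpow_le_rpow (Real.rpow_nonneg hL0.le _) (by linarith) (by norm_num)
    rw [e1, ← e2]; exact e3
  have hLp : (0:ℝ) < L ^ α' := Real.rpow_pos_of_pos hL0 _
  calc L ^ α' * C < L ^ α' * (ε * L ^ (α - α')) := by
        exact (mul_lt_mul_iff_right₀ hLp).mpr hkey
    _ = ε * (L ^ α' * L ^ (α - α')) := by ring
    _ ≤ ε * (1 + L ^ (2*α)) ^ ((1:ℝ)/2) := mul_le_mul_of_nonneg_left hW hε.le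

/-- approximation in the weighted norm `‖·‖_{α'}` of a function vanishing
logarithmically at `1` by functions `(z-1)Q(z)` with `Q` a trigonometric polynomial. -/
theorem stmt3 (α α' : ℝ) (h1 : 1 < α') (h2 : α' < α)
    (f : ℂ → ℂ) (hf1 : f 1 = 0)
    (g : ℂ → ℂ) (hg : ContinuousOn g (Metric.sphere (0:ℂ) 1))
    (hfg : ∀ w ∈ Metric.sphere (0:ℂ) 1, w ≠ 1 →
      g w = f w * (((1 + |Real.log ‖w - 1‖| ^ (2*α)) ^ ((1:ℝ)/2) : ℝ) : ℂ)) :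
    ∀ ε > (0:ℝ), ∃ (N : ℕ) (c : ℤ → ℂ),
      ∀ w ∈ Metric.sphere (0:ℂ) 1, w ≠ 1 →
        |Real.log ‖w - 1‖| ^ α' *
          ‖f w - (w - 1) * ∑ m ∈ Finset.Icc (-(N:ℤ)) (N:ℤ), c m * w ^ m‖ < ε := by
  intro ε hε
  have hα'0 : (0:ℝ) < α' := by linarith
  -- the weight function
  set W : ℂ → ℝ := fun w => (1 + |Real.log ‖w - 1‖| ^ (2*α)) ^ ((1:ℝ)/2) with hWdef
  have hW1 : ∀ w : ℂ, 1 ≤ W w := by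
    intro w
    have h0 : (0:ℝ) ≤ |Real.log ‖w - 1‖| ^ (2*α) := Real.rpow_nonneg (abs_nonneg _) _
    calc (1:ℝ) = 1 ^ ((1:ℝ)/2) := (Real.one_rpow _).symm
      _ ≤ (1 + |Real.log ‖w - 1‖| ^ (2*α)) ^ ((1:ℝ)/2) :=
          Real.rpow_le_rpow (by norm_num) (by linarith) (by norm_num)
  -- bound on g
  obtain ⟨C₀, hC₀⟩ := (isCompact_sphere (0:ℂ) 1).exists_bound_of_continuousOn hg
  set C : ℝ := max C₀ 0 with hCdef
  have hC : 0 ≤ C := le_max_right _ _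
  have hCg : ∀ w ∈ Metric.sphere (0:ℂ) 1, ‖g w‖ ≤ C := fun w hw =>
    (hC₀ w hw).trans (le_max_left _ _)
  -- δ from near_one
  obtain ⟨δ, hδ0, hδ1, hδ⟩ := near_one h1 h2 hC (show (0:ℝ) < ε/3 by linarith)
  -- K
  set K : ℝ := (2*α') ^ α' + 2 with hKdef
  have hK0 : (0:ℝ) ≤ (2*α') ^ α' := Real.rpow_nonneg (by linarith) _
  have hKpos : (0:ℝ) < K := by rw [hKdef]; linarith
  -- cutoff
  set χ : ℂ → ℝ := fun w => min 1 (max 0 (2/δ * (‖w - 1‖ - δ/2))) with hχdef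
  have hχcont : Continuous χ := by fun_prop
  have hχ0le : ∀ w, 0 ≤ χ w := fun w => le_min (by norm_num) (le_max_left _ _)
  have hχle1 : ∀ w, χ w ≤ 1 := fun w => min_le_left _ _
  have hχ0 : ∀ w : ℂ, ‖w - 1‖ ≤ δ/2 → χ w = 0 := by
    intro w hw
    rw [hχdef]
    simp only
    rw [max_eq_left, min_eq_right] <;>
      [norm_num; skip] <;>
      · apply mul_nonpos_of_nonneg_of_nonpos (by positivity) (by linarith)
  have hχ1 : ∀ w : ℂ, δ ≤ ‖w - 1‖ → χ w = 1 := by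
    intro w hw
    rw [hχdef]
    simp only
    have h2 : (1:ℝ) ≤ 2/δ * (‖w - 1‖ - δ/2) := by
      rw [div_mul_eq_mul_div, le_div_iff₀ hδ0]
      nlinarith
    rw [max_eq_right (by linarith), min_eq_left h2]
  -- f in terms of g
  have hWne : ∀ w : ℂ, ((W w : ℝ) : ℂ) ≠ 0 := by
    intro w
    simp only [ne_eq, Complex.ofReal_eq_zero]
    have := hW1 w; intro hcon; rw [hcon] at this; linarith
  have hfd : ∀ w ∈ Metric.sphere (0:ℂ) 1, w ≠ 1 → f w = g w / ((W w : ℝ) : ℂ) := by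
    intro w hw hw1
    rw [hfg w hw hw1]
    show f w = f w * ((W w : ℝ) : ℂ) / ((W w : ℝ) : ℂ)
    rw [mul_div_assoc, div_self (hWne w), mul_one]
  -- ψ
  set ψ : ℂ → ℂ := fun w => if w = 1 then 0 else f w * ((χ w : ℝ) : ℂ) / (w - 1) with hψdef
  -- continuity of W off 1
  have hWcont : ∀ w : ℂ, w ≠ 1 → ContinuousAt W w := by
    intro w hw1
    have hne : ‖w - 1‖ ≠ 0 := by
      simp only [ne_eq, norm_eq_zero, sub_eq_zero]; exact hw1
    have c1 : ContinuousAt (fun w : ℂ => ‖w - 1‖) w := by fun_prop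
    have c2 : ContinuousAt (fun w : ℂ => Real.log ‖w - 1‖) w := c1.log hne
    have c3 : ContinuousAt (fun w : ℂ => |Real.log ‖w - 1‖|) w := c2.abs
    have c4 : ContinuousAt (fun w : ℂ => |Real.log ‖w - 1‖| ^ (2*α)) w :=
      c3.rpow_const (Or.inr (by linarith))
    have c5 : ContinuousAt (fun w : ℂ => 1 + |Real.log ‖w - 1‖| ^ (2*α)) w :=
      continuousAt_const.add c4
    exact c5.rpow_const (Or.inr (by norm_num))
  have hψcont : ContinuousOn ψ (Metric.sphere (0:ℂ) 1) := by
    intro w hw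
    by_cases hw1 : w = 1
    · subst hw1
      have hev : ψ =ᶠ[nhds (1:ℂ)] (fun _ => (0:ℂ)) := by
        filter_upwards [Metric.ball_mem_nhds (1:ℂ) (show (0:ℝ) < δ/2 by linarith)] with w' hw'
        by_cases h : w' = 1
        · simp [hψdef, h]
        · have hle : ‖w' - 1‖ ≤ δ/2 := by
            rw [Metric.mem_ball, dist_eq_norm] at hw'
            linarith
          simp [hψdef, h, hχ0 w' hle]
      exact (continuousWithinAt_const (b := (0:ℂ))).congr_of_eventuallyEq
        (hev.filter_mono nhdsWithin_le_nhds) (by simp [hψdef])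
    · have hmem : w ∈ Metric.sphere (0:ℂ) 1 \ {1} := ⟨hw, hw1⟩
      have hF : ContinuousWithinAt
          (fun w' => g w' / ((W w' : ℝ) : ℂ) * ((χ w' : ℝ) : ℂ) / (w' - 1))
          (Metric.sphere (0:ℂ) 1 \ {1}) w := by
        apply ContinuousWithinAt.div
        · apply ContinuousWithinAt.mul
          · apply ContinuousWithinAt.div
            · exact (hg.mono Set.diff_subset) w hmem
            · exact (Complex.continuous_ofReal.continuousAt.comp
                (hWcont w hw1)).continuousWithinAt
            · exact hWne w
          · exact (Complex.continuous_ofReal.continuousAt.comp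
              hχcont.continuousAt).continuousWithinAt
        · exact (continuousAt_id.sub continuousAt_const).continuousWithinAt
        · rw [sub_ne_zero]; exact hw1
      have heq : ∀ w' ∈ Metric.sphere (0:ℂ) 1 \ {1},
          ψ w' = g w' / ((W w' : ℝ) : ℂ) * ((χ w' : ℝ) : ℂ) / (w' - 1) := by
        intro w' hw'
        have h2 : w' ≠ 1 := fun h => hw'.2 (by simp [h])
        rw [hψdef]
        simp only [if_neg h2]
        rw [hfd w' hw'.1 h2]
      exact (hF.congr heq (heq w hmem)).mono_of_mem_nhdsWithin <| by
        rw [Set.diff_eq]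
        exact Filter.inter_mem self_mem_nhdsWithin
          (mem_nhdsWithin_of_mem_nhds (isOpen_compl_singleton.mem_nhds hw1))
  -- continuous map and approximation
  set ψC : C(sphere1, ℂ) :=
    ⟨(Metric.sphere (0:ℂ) 1).restrict ψ, continuousOn_iff_continuous_restrict.mp hψcont⟩ with hψC
  obtain ⟨q, hqA, hdist⟩ := dense_aux ψC (ε/(3*K)) (by positivity)
  obtain ⟨N, c, hNc⟩ := laurent_form q hqA
  refine ⟨N, c, ?_⟩
  intro w hw hw1
  set Q : ℂ := ∑ m ∈ Finset.Icc (-(N:ℤ)) (N:ℤ), c m * w ^ m with hQ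
  have ht0 : (0:ℝ) < ‖w - 1‖ := by
    rw [norm_pos_iff, sub_ne_zero]; exact hw1
  have ht2 : ‖w - 1‖ ≤ 2 := by
    have h1n : ‖w‖ = 1 := by rwa [mem_sphere_zero_iff_norm] at hw
    calc ‖w - 1‖ ≤ ‖w‖ + ‖(1:ℂ)‖ := norm_sub_le _ _
      _ = 2 := by rw [h1n]; norm_num
  set L : ℝ := |Real.log ‖w - 1‖| with hL
  have hLα : (0:ℝ) ≤ L ^ α' := Real.rpow_nonneg (abs_nonneg _) _
  -- ψ close to Q at w
  have hψQ : ‖ψ w - Q‖ ≤ ε/(3*K) := by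
    have h1' : ψ w = ψC ⟨w, hw⟩ := rfl
    have h2' : Q = q ⟨w, hw⟩ := (hNc ⟨w, hw⟩).symm
    rw [h1', h2', ← dist_eq_norm]
    exact (ContinuousMap.dist_apply_le_dist _).trans hdist.le
  -- algebraic split
  have hsplit : f w - (w - 1) * Q = f w * (1 - ((χ w : ℝ) : ℂ)) + (w - 1) * (ψ w - Q) := by
    have hψw : (w - 1) * ψ w = f w * ((χ w : ℝ) : ℂ) := by
      rw [hψdef]
      simp only [if_neg hw1]
      have : w - 1 ≠ 0 := by rw [sub_ne_zero]; exact hw1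
      field_simp
    linear_combination -hψw
  have hnorm : ‖f w - (w - 1) * Q‖ ≤ ‖f w‖ * (1 - χ w) + ‖w - 1‖ * ‖ψ w - Q‖ := by
    rw [hsplit]
    refine (norm_add_le _ _).trans ?_
    rw [norm_mul, norm_mul]
    have : ‖(1 : ℂ) - ((χ w : ℝ) : ℂ)‖ = 1 - χ w := by
      rw [show (1 : ℂ) - ((χ w : ℝ) : ℂ) = (((1 - χ w : ℝ)) : ℂ) by push_cast; ring,
        Complex.norm_real, Real.norm_eq_abs, _root_.abs_of_nonneg (by linarith [hχle1 w])]
    rw [this]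
  -- second term bound
  have hterm2 : L ^ α' * (‖w - 1‖ * ‖ψ w - Q‖) ≤ ε/3 := by
    have hKb : L ^ α' * ‖w - 1‖ ≤ K := Kbound h1 ht0 ht2
    calc L ^ α' * (‖w - 1‖ * ‖ψ w - Q‖) = (L ^ α' * ‖w - 1‖) * ‖ψ w - Q‖ := by ring
      _ ≤ K * (ε/(3*K)) := by
          apply mul_le_mul hKb hψQ (norm_nonneg _) hKpos.le
      _ = ε/3 := by field_simp
  by_cases hcase : ‖w - 1‖ < δ
  · -- near 1 : weighted f is small
    have hsmall : L ^ α' * ‖f w‖ < ε/3 := by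
      have hWg : ‖g w‖ = ‖f w‖ * W w := by
        rw [hfg w hw hw1, norm_mul]
        show ‖f w‖ * ‖((W w : ℝ) : ℂ)‖ = ‖f w‖ * W w
        rw [Complex.norm_real, Real.norm_eq_abs, _root_.abs_of_nonneg (by linarith [hW1 w])]
      have hkey := hδ ‖w - 1‖ ht0 hcase
      have hWpos : (0:ℝ) < W w := by linarith [hW1 w]
      have h5 : L ^ α' * ‖g w‖ ≤ L ^ α' * C :=
        mul_le_mul_of_nonneg_left (hCg w hw) hLα
      have h6 : L ^ α' * (‖f w‖ * W w) < (ε/3) * W w := by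
        rw [← hWg]; exact lt_of_le_of_lt h5 hkey
      nlinarith [hLα, norm_nonneg (f w)]
    have hterm1 : L ^ α' * (‖f w‖ * (1 - χ w)) < ε/3 := by
      have h01 : 0 ≤ 1 - χ w := by linarith [hχle1 w]
      have h11 : 1 - χ w ≤ 1 := by linarith [hχ0le w]
      calc L ^ α' * (‖f w‖ * (1 - χ w)) ≤ L ^ α' * (‖f w‖ * 1) := by
            apply mul_le_mul_of_nonneg_left _ hLα
            exact mul_le_mul_of_nonneg_left h11 (norm_nonneg _)
        _ = L ^ α' * ‖f w‖ := by ring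
        _ < ε/3 := hsmall
    calc L ^ α' * ‖f w - (w - 1) * Q‖
        ≤ L ^ α' * (‖f w‖ * (1 - χ w) + ‖w - 1‖ * ‖ψ w - Q‖) :=
          mul_le_mul_of_nonneg_left hnorm hLα
      _ = L ^ α' * (‖f w‖ * (1 - χ w)) + L ^ α' * (‖w - 1‖ * ‖ψ w - Q‖) := by ring
      _ < ε/3 + ε/3 := by
          apply add_lt_add_of_lt_of_le hterm1 hterm2
      _ < ε := by linarith
  · -- far from 1 : cutoff equals 1
    push_neg at hcase
    have hχw : χ w = 1 := hχ1 w hcase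
    calc L ^ α' * ‖f w - (w - 1) * Q‖
        ≤ L ^ α' * (‖f w‖ * (1 - χ w) + ‖w - 1‖ * ‖ψ w - Q‖) :=
          mul_le_mul_of_nonneg_left hnorm hLα
      _ = L ^ α' * (‖w - 1‖ * ‖ψ w - Q‖) := by rw [hχw]; ring
      _ ≤ ε/3 := hterm2
      _ < ε := by linarith
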